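/- Anti-holomorphic Boettcher theorem: Let z₀ ∈ ℂ, let m ≥ 2 be a natural number, and let h be complex analytic at conj z₀ with h(conj z₀) ≠ 0. Suppose g(w) = z₀ + (w − conj z₀)^m · h(w) for all w in a neighborhood of conj z₀, so that f(z) = g(conj z) is an anti-analytic map with a superattracting fixed point of local degree m at z₀. Then there exists a function φ : ℂ → ℂ, complex analytic at z₀, with φ(z₀) = 0 and deriv φ z₀ ≠ 0, such that φ(f(z)) = conj(φ(z))^m for all z in some neighborhood of z₀. -/

import Mathlib

open Complex Filter Topology Metric

lemma hasDerivAt_conj_conj {f : ℂ → ℂ} {w d : ℂ} (hf : HasDerivAt f d w) :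
    HasDerivAt (fun z => (starRingEnd ℂ) (f ((starRingEnd ℂ) z))) ((starRingEnd ℂ) d)
      ((starRingEnd ℂ) w) := by
  rw [hasDerivAt_iff_tendsto_slope] at hf ⊢
  have hconj : Tendsto (starRingEnd ℂ) (𝓝[≠] ((starRingEnd ℂ) w)) (𝓝[≠] w) := by
    apply Tendsto.inf
    · have := (Complex.continuous_conj.tendsto ((starRingEnd ℂ) w))
      simpa using this
    · rw [tendsto_principal_principal]
      intro u hu
      simp only [Set.mem_compl_iff, Set.mem_singleton_iff] at hu ⊢
      intro hc
      apply hu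
      rw [← hc]; simp
  have := (Complex.continuous_conj.tendsto d).comp (hf.comp hconj)
  apply this.congr'
  filter_upwards [self_mem_nhdsWithin] with u hu
  simp only [Function.comp_apply, slope_def_field, Complex.conj_conj]
  rw [map_div₀]
  simp

lemma analyticAt_conj_conj {f : ℂ → ℂ} {w : ℂ} (hf : AnalyticAt ℂ f w) :
    AnalyticAt ℂ (fun z => (starRingEnd ℂ) (f ((starRingEnd ℂ) z))) ((starRingEnd ℂ) w) := by
  rw [analyticAt_iff_eventually_differentiableAt]
  have h1 : ∀ᶠ u in 𝓝 w, DifferentiableAt ℂ f u := by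
    filter_upwards [hf.eventually_analyticAt] with u hu using hu.differentiableAt
  have hc : Tendsto (starRingEnd ℂ) (𝓝 ((starRingEnd ℂ) w)) (𝓝 w) := by
    simpa using Complex.continuous_conj.tendsto ((starRingEnd ℂ) w)
  filter_upwards [hc.eventually h1] with u hu
  have := (hasDerivAt_conj_conj hu.hasDerivAt).differentiableAt
  simpa using this

/-- Anti-holomorphic Boettcher theorem: an anti-analytic map `f z = g (conj z)` with a
superattracting fixed point of local degree `m ≥ 2` at `z₀` is locally conjugate to
`z ↦ (conj z)^m` via an analytic map `φ` with `φ z₀ = 0` and `deriv φ z₀ ≠ 0`. -/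
theorem stmt3 (z₀ : ℂ) (m : ℕ) (hm : 2 ≤ m) (g h : ℂ → ℂ)
    (hh : AnalyticAt ℂ h ((starRingEnd ℂ) z₀))
    (hh0 : h ((starRingEnd ℂ) z₀) ≠ 0)
    (hg : ∀ᶠ w in nhds ((starRingEnd ℂ) z₀),
      g w = z₀ + (w - (starRingEnd ℂ) z₀)^m * h w) :
    ∃ φ : ℂ → ℂ, AnalyticAt ℂ φ z₀ ∧ φ z₀ = 0 ∧ deriv φ z₀ ≠ 0 ∧
      ∀ᶠ z in nhds z₀, φ (g ((starRingEnd ℂ) z)) = ((starRingEnd ℂ) (φ z))^m := by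
  set w₀ : ℂ := (starRingEnd ℂ) z₀ with hw₀def
  have hm0 : (m:ℂ) ≠ 0 := by
    simp only [ne_eq, Nat.cast_eq_zero]
    omega
  -- a logarithm of h near w₀
  obtain ⟨ℓ, hℓa, hexp⟩ : ∃ ℓ : ℂ → ℂ, AnalyticAt ℂ ℓ w₀ ∧
      ∀ᶠ w in 𝓝 w₀, Complex.exp (ℓ w) = h w := by
    refine ⟨fun w => Complex.log (h w₀) + Complex.log (h w / h w₀), ?_, ?_⟩
    · apply analyticAt_const.add
      have hdiv : AnalyticAt ℂ (fun w => h w / h w₀) w₀ := hh.div analyticAt_const hh0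
      apply (analyticAt_clog ?_).comp hdiv
      have h1 : h w₀ / h w₀ = 1 := div_self hh0
      rw [h1]
      exact Complex.one_mem_slitPlane
    · filter_upwards [hh.continuousAt.eventually_ne hh0] with w hw
      rw [Complex.exp_add, Complex.exp_log hh0, Complex.exp_log (div_ne_zero hw hh0)]
      field_simp
  -- constants
  set H : ℝ := ‖h w₀‖ + 1 with hHdef
  set M : ℝ := ‖ℓ w₀‖ + 1 with hMdef
  have hHpos : 0 < H := by positivity
  have hMpos : 0 < M := by positivity
  -- choose a radius where everything works
  have hball : ∃ r : ℝ, 0 < r ∧ r ≤ 1 ∧ r * H ≤ 1 ∧ ∀ w ∈ ball w₀ r,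
      g w = z₀ + (w - w₀)^m * h w ∧ Complex.exp (ℓ w) = h w ∧
      AnalyticAt ℂ h w ∧ AnalyticAt ℂ ℓ w ∧ ‖h w‖ ≤ H ∧ ‖ℓ w‖ ≤ M := by
    have hHb : ∀ᶠ w in 𝓝 w₀, ‖h w‖ ≤ H := by
      filter_upwards [hh.continuousAt.eventually_mem (Metric.ball_mem_nhds (h w₀) one_pos)]
        with w hw
      have h2 := mem_ball_iff_norm.mp hw
      rw [hHdef]
      calc ‖h w‖ = ‖h w₀ + (h w - h w₀)‖ := by ring_nf
        _ ≤ ‖h w₀‖ + ‖h w - h w₀‖ := norm_add_le _ _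
        _ ≤ ‖h w₀‖ + 1 := by linarith
    have hMb : ∀ᶠ w in 𝓝 w₀, ‖ℓ w‖ ≤ M := by
      filter_upwards [hℓa.continuousAt.eventually_mem (Metric.ball_mem_nhds (ℓ w₀) one_pos)]
        with w hw
      have h2 := mem_ball_iff_norm.mp hw
      rw [hMdef]
      calc ‖ℓ w‖ = ‖ℓ w₀ + (ℓ w - ℓ w₀)‖ := by ring_nf
        _ ≤ ‖ℓ w₀‖ + ‖ℓ w - ℓ w₀‖ := norm_add_le _ _
        _ ≤ ‖ℓ w₀‖ + 1 := by linarith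
    have hall : ∀ᶠ w in 𝓝 w₀, g w = z₀ + (w - w₀)^m * h w ∧ Complex.exp (ℓ w) = h w ∧
        AnalyticAt ℂ h w ∧ AnalyticAt ℂ ℓ w ∧ ‖h w‖ ≤ H ∧ ‖ℓ w‖ ≤ M := by
      filter_upwards [hg, hexp, hh.eventually_analyticAt, hℓa.eventually_analyticAt, hHb, hMb]
        with w h1 h2 h3 h4 h5 h6
      exact ⟨h1, h2, h3, h4, h5, h6⟩
    obtain ⟨s, hs, hso, hsmem⟩ := _root_.mem_nhds_iff.mp hall
    obtain ⟨ε, hε, hεs⟩ := Metric.isOpen_iff.mp hso w₀ hsmem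
    refine ⟨min ε (min 1 H⁻¹), ?_, ?_, ?_, ?_⟩
    · positivity
    · exact le_trans (min_le_right _ _) (min_le_left _ _)
    · have hle : min ε (min 1 H⁻¹) ≤ H⁻¹ := le_trans (min_le_right _ _) (min_le_right _ _)
      calc min ε (min 1 H⁻¹) * H ≤ H⁻¹ * H :=
            mul_le_mul_of_nonneg_right hle (le_of_lt hHpos)
        _ = 1 := inv_mul_cancel₀ (ne_of_gt hHpos)
    · intro w hw
      exact hs (hεs (Metric.ball_subset_ball (min_le_left _ _) hw))
  obtain ⟨r, hr, hr1, hrH, hS⟩ := hball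
  set B : Set ℂ := ball z₀ r with hBdef
  have hBopen : IsOpen B := Metric.isOpen_ball
  have hz₀B : z₀ ∈ B := mem_ball_self hr
  -- the contraction estimate
  have key : ∀ w ∈ ball w₀ r, ‖(w - w₀)^m * h w‖ < r := by
    intro w hw
    have hx : ‖w - w₀‖ < r := mem_ball_iff_norm.mp hw
    have hx0 : (0:ℝ) ≤ ‖w - w₀‖ := norm_nonneg _
    have hH : ‖h w‖ ≤ H := (hS w hw).2.2.2.2.1
    rw [norm_mul, norm_pow]
    have h2 : ‖w - w₀‖^m ≤ ‖w - w₀‖ * r^(m-1) := by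
      have he : ‖w - w₀‖^m = ‖w - w₀‖ * ‖w - w₀‖^(m-1) := by
        rw [← pow_succ']
        congr 1
        omega
      rw [he]
      exact mul_le_mul_of_nonneg_left (pow_le_pow_left₀ hx0 (le_of_lt hx) _) hx0
    have h3 : r^(m-1) ≤ r := by
      apply pow_le_of_le_one (le_of_lt hr) hr1
      omega
    calc ‖w - w₀‖^m * ‖h w‖ ≤ (‖w - w₀‖ * r) * H := by
          apply mul_le_mul _ hH (norm_nonneg _) (by positivity)
          exact le_trans h2 (mul_le_mul_of_nonneg_left h3 hx0)
      _ = ‖w - w₀‖ * (r * H) := by ring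
      _ ≤ ‖w - w₀‖ * 1 := mul_le_mul_of_nonneg_left hrH hx0
      _ = ‖w - w₀‖ := mul_one _
      _ < r := hx
  -- the basic maps: q is the model map, F the anti-holomorphic iterate map,
  -- gh its conjugate, G the (holomorphic) second iterate
  set q : ℂ → ℂ := fun w => z₀ + (w - w₀)^m * h w with hqdef
  set F : ℂ → ℂ := fun z => q ((starRingEnd ℂ) z) with hFdef
  set gh : ℂ → ℂ := fun z => (starRingEnd ℂ) (F z) with hghdef
  set G : ℂ → ℂ := fun z => F (F z) with hGdef
  have hqdiff : DifferentiableOn ℂ q (ball w₀ r) := by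
    intro w hw
    apply DifferentiableAt.differentiableWithinAt
    have : AnalyticAt ℂ q w := by
      rw [hqdef]
      exact analyticAt_const.add ((((analyticAt_id).sub analyticAt_const).pow m).mul
        (hS w hw).2.2.1)
    exact this.differentiableAt
  have hqball : ∀ w ∈ ball w₀ r, q w ∈ B := by
    intro w hw
    rw [hBdef, mem_ball_iff_norm]
    have : q w - z₀ = (w - w₀)^m * h w := by rw [hqdef]; ring
    rw [this]
    exact key w hw
  -- conj maps B to ball w₀ r
  have hcb : ∀ z ∈ B, (starRingEnd ℂ) z ∈ ball w₀ r := by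
    intro z hz
    rw [hBdef, mem_ball] at hz
    rw [mem_ball, hw₀def, Complex.dist_conj_conj]
    exact hz
  have hFb : ∀ z ∈ B, F z ∈ B := by
    intro z hz
    rw [hFdef]
    exact hqball _ (hcb z hz)
  have hghb : ∀ z ∈ B, gh z ∈ ball w₀ r := by
    intro z hz
    rw [hghdef]
    have h1 := hFb z hz
    rw [hBdef, mem_ball] at h1
    simp only
    rw [mem_ball, hw₀def, Complex.dist_conj_conj]
    exact h1
  have hGb : ∀ z ∈ B, G z ∈ B := by
    intro z hz
    rw [hGdef]
    exact hFb _ (hFb z hz)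
  -- gh is holomorphic on B
  have hghformula : ∀ z : ℂ, gh z = w₀ + (z - z₀)^m * (starRingEnd ℂ) (h ((starRingEnd ℂ) z)) := by
    intro z
    rw [hghdef, hFdef, hqdef]
    simp only [map_add, map_mul, map_pow, map_sub, Complex.conj_conj, hw₀def]
  have hghdiff : DifferentiableOn ℂ gh B := by
    intro z hz
    apply DifferentiableAt.differentiableWithinAt
    have hhz : AnalyticAt ℂ h ((starRingEnd ℂ) z) := (hS _ (hcb z hz)).2.2.1
    have hconjh : AnalyticAt ℂ (fun u => (starRingEnd ℂ) (h ((starRingEnd ℂ) u))) z := by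
      have := analyticAt_conj_conj hhz
      simpa using this
    have ha : AnalyticAt ℂ
        (fun u => w₀ + (u - z₀)^m * (starRingEnd ℂ) (h ((starRingEnd ℂ) u))) z :=
      analyticAt_const.add ((((analyticAt_id).sub analyticAt_const).pow m).mul hconjh)
    apply ha.differentiableAt.congr_of_eventuallyEq
    filter_upwards with u
    rw [hghformula u]
  have hGeq : ∀ z : ℂ, G z = q (gh z) := by
    intro z
    rw [hGdef, hghdef, hFdef]
  have hGdiff : DifferentiableOn ℂ G B := by
    apply DifferentiableOn.congr (hqdiff.comp hghdiff hghb)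
    intro z hz
    rw [hGeq]
    rfl
  -- the sequence of building blocks
  set b : ℕ → ℂ → ℂ := fun n => Nat.rec (fun z => (starRingEnd ℂ) (ℓ ((starRingEnd ℂ) z)))
    (fun _ bn => fun z => (starRingEnd ℂ) (bn (F z))) n with hbdef
  have hb0 : ∀ z, b 0 z = (starRingEnd ℂ) (ℓ ((starRingEnd ℂ) z)) := fun z => rfl
  have hbsucc : ∀ n z, b (n+1) z = (starRingEnd ℂ) (b n (F z)) := fun n z => rfl
  have hbstep : ∀ n z, b (n+2) z = b n (G z) := by
    intro n z
    have h1 : b (n+2) z = (starRingEnd ℂ) (b (n+1) (F z)) := rfl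
    rw [h1, hbsucc, Complex.conj_conj]
  -- differentiability and bound for b n
  have hP : ∀ n : ℕ, DifferentiableOn ℂ (b n) B ∧ ∀ z ∈ B, ‖b n z‖ ≤ M := by
    have hP0 : DifferentiableOn ℂ (b 0) B ∧ ∀ z ∈ B, ‖b 0 z‖ ≤ M := by
      constructor
      · intro z hz
        apply DifferentiableAt.differentiableWithinAt
        have hℓz : AnalyticAt ℂ ℓ ((starRingEnd ℂ) z) := (hS _ (hcb z hz)).2.2.2.1
        have := analyticAt_conj_conj hℓz
        simp only [Complex.conj_conj] at this
        exact this.differentiableAt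
      · intro z hz
        rw [hb0]
        rw [RCLike.norm_conj]
        exact (hS _ (hcb z hz)).2.2.2.2.2
    have hP1 : DifferentiableOn ℂ (b 1) B ∧ ∀ z ∈ B, ‖b 1 z‖ ≤ M := by
      have h1eq : ∀ z, b 1 z = ℓ (gh z) := by
        intro z
        have h1 : b 1 z = (starRingEnd ℂ) (b 0 (F z)) := rfl
        rw [h1, hb0, Complex.conj_conj]
      constructor
      · have hℓdiff : DifferentiableOn ℂ ℓ (ball w₀ r) := by
          intro w hw
          exact ((hS w hw).2.2.2.1).differentiableAt.differentiableWithinAt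
        apply DifferentiableOn.congr (hℓdiff.comp hghdiff hghb)
        intro z hz
        rw [h1eq]
        rfl
      · intro z hz
        rw [h1eq]
        exact (hS _ (hghb z hz)).2.2.2.2.2
    have hstep : ∀ n, (DifferentiableOn ℂ (b n) B ∧ ∀ z ∈ B, ‖b n z‖ ≤ M) →
        DifferentiableOn ℂ (b (n+2)) B ∧ ∀ z ∈ B, ‖b (n+2) z‖ ≤ M := by
      intro n ⟨hd, hbnd⟩
      constructor
      · apply DifferentiableOn.congr (hd.comp hGdiff hGb)
        intro z hz
        rw [hbstep]
        rfl
      · intro z hz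
        rw [hbstep]
        exact hbnd _ (hGb z hz)
    have hPP : ∀ n : ℕ, (DifferentiableOn ℂ (b n) B ∧ ∀ z ∈ B, ‖b n z‖ ≤ M) ∧
        (DifferentiableOn ℂ (b (n+1)) B ∧ ∀ z ∈ B, ‖b (n+1) z‖ ≤ M) := by
      intro n
      induction n with
      | zero => exact ⟨hP0, hP1⟩
      | succ k ih => exact ⟨ih.2, hstep k ih.1⟩
    exact fun n => (hPP n).1
  -- the series
  set term : ℕ → ℂ → ℂ := fun n z => (((m:ℂ))^(n+1))⁻¹ * b n z with htermdef
  set u : ℕ → ℝ := fun n => M * (1/2)^(n+1) with hudef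
  have hsumu : Summable u := by
    rw [hudef]
    apply Summable.mul_left
    have h12 : Summable (fun n : ℕ => (1/2:ℝ)^n) := summable_geometric_of_lt_one
      (by norm_num) (by norm_num)
    have := h12.mul_left (1/2 : ℝ)
    apply this.congr
    intro n
    rw [pow_succ']
  have hterm_bound : ∀ (n : ℕ), ∀ z ∈ B, ‖term n z‖ ≤ u n := by
    intro n z hz
    rw [htermdef, hudef]
    simp only
    rw [norm_mul, norm_inv, norm_pow, Complex.norm_natCast]
    have h1 : ((m:ℝ)^(n+1))⁻¹ ≤ (1/2:ℝ)^(n+1) := by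
      rw [one_div, inv_pow]
      apply inv_anti₀ (by positivity)
      apply pow_le_pow_left₀ (by norm_num)
      exact_mod_cast hm
    calc ((m:ℝ)^(n+1))⁻¹ * ‖b n z‖ ≤ (1/2:ℝ)^(n+1) * M := by
          apply mul_le_mul h1 ((hP n).2 z hz) (norm_nonneg _) (by positivity)
      _ = M * (1/2)^(n+1) := by ring
  have hsum : ∀ z ∈ B, Summable (fun n => term n z) := by
    intro z hz
    exact Summable.of_norm_bounded hsumu (fun n => hterm_bound n z hz)
  set v : ℂ → ℂ := fun z => ∑' n, term n z with hvdef
  have hTU : TendstoUniformlyOn (fun (t : Finset ℕ) z => ∑ n ∈ t, term n z) v atTop B := by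
    rw [hvdef]
    exact tendstoUniformlyOn_tsum hsumu (fun n x hx => hterm_bound n x hx)
  have hvdiff : DifferentiableOn ℂ v B := by
    apply hTU.tendstoLocallyUniformlyOn.differentiableOn _ hBopen
    apply Filter.Eventually.of_forall
    intro t
    apply DifferentiableOn.fun_sum
    intro n _
    exact (hP n).1.const_mul _
  have hva : AnalyticAt ℂ v z₀ := hvdiff.analyticAt (hBopen.mem_nhds hz₀B)
  -- the functional equation for v
  have feq : ∀ z ∈ B, (m:ℂ) * v z =
      (starRingEnd ℂ) (ℓ ((starRingEnd ℂ) z)) + (starRingEnd ℂ) (v (F z)) := by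
    intro z hz
    have hFz : F z ∈ B := hFb z hz
    have hterm_eq : ∀ n, (m:ℂ) * term n z = ((m:ℂ)^n)⁻¹ * b n z := by
      intro n
      rw [htermdef]
      simp only
      rw [pow_succ, mul_inv]
      field_simp
    have hsum2 : Summable (fun n => ((m:ℂ)^n)⁻¹ * b n z) := by
      apply Summable.congr ((hsum z hz).mul_left ((m:ℂ)))
      exact hterm_eq
    calc (m:ℂ) * v z = ∑' n, (m:ℂ) * term n z := by rw [hvdef]; exact (tsum_mul_left).symm
      _ = ∑' n, ((m:ℂ)^n)⁻¹ * b n z := tsum_congr hterm_eq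
      _ = ((m:ℂ)^0)⁻¹ * b 0 z + ∑' n, ((m:ℂ)^(n+1))⁻¹ * b (n+1) z :=
          Summable.tsum_eq_zero_add hsum2
      _ = b 0 z + ∑' n, ((m:ℂ)^(n+1))⁻¹ * b (n+1) z := by
          rw [pow_zero, inv_one, one_mul]
      _ = b 0 z + ∑' n, (starRingEnd ℂ) (term n (F z)) := by
          congr 1
          apply tsum_congr
          intro n
          rw [hbsucc, htermdef]
          simp only
          rw [map_mul, map_inv₀, map_pow, map_natCast]
      _ = b 0 z + (starRingEnd ℂ) (∑' n, term n (F z)) := by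
          congr 1
          simp only [starRingEnd_apply]
          exact (tsum_star).symm
      _ = (starRingEnd ℂ) (ℓ ((starRingEnd ℂ) z)) + (starRingEnd ℂ) (v (F z)) := by
          rw [hb0, hvdef]
  -- the Boettcher coordinate
  set φ : ℂ → ℂ := fun z => (z - z₀) * Complex.exp (v z) with hφdef
  have hφa : AnalyticAt ℂ φ z₀ := by
    rw [hφdef]
    exact ((analyticAt_id).sub analyticAt_const).mul hva.cexp
  have hφ0 : φ z₀ = 0 := by rw [hφdef]; simp
  have hφd : HasDerivAt φ (Complex.exp (v z₀)) z₀ := by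
    have h1 : HasDerivAt (fun z => z - z₀) 1 z₀ := (hasDerivAt_id z₀).sub_const z₀
    have h2 : HasDerivAt (fun z => Complex.exp (v z))
        (Complex.exp (v z₀) * deriv v z₀) z₀ :=
      (hva.differentiableAt.hasDerivAt).cexp
    have := h1.mul h2
    simp only [one_mul, sub_self, zero_mul, add_zero] at this
    rw [hφdef]
    exact this
  have hφd0 : deriv φ z₀ ≠ 0 := by
    rw [hφd.deriv]
    exact Complex.exp_ne_zero _
  refine ⟨φ, hφa, hφ0, hφd0, ?_⟩
  filter_upwards [hBopen.eventually_mem hz₀B] with z hz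
  have hcz := hcb z hz
  have hgF : g ((starRingEnd ℂ) z) = F z := by
    rw [(hS _ hcz).1, hFdef, hqdef]
  rw [hgF]
  -- the exponent identity
  have hvconj : (m:ℂ) * (starRingEnd ℂ) (v z) = ℓ ((starRingEnd ℂ) z) + v (F z) := by
    have := congrArg (starRingEnd ℂ) (feq z hz)
    rw [map_mul, map_add, Complex.conj_conj, Complex.conj_conj, map_natCast] at this
    exact this
  have hexpz : Complex.exp (ℓ ((starRingEnd ℂ) z)) = h ((starRingEnd ℂ) z) := (hS _ hcz).2.1
  rw [hφdef]
  simp only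
  rw [map_mul, mul_pow, map_sub, ← hw₀def, ← Complex.exp_conj, ← Complex.exp_nat_mul, hvconj,
    Complex.exp_add, hexpz]
  have hFz : F z - z₀ = ((starRingEnd ℂ) z - w₀)^m * h ((starRingEnd ℂ) z) := by
    rw [hFdef, hqdef]; ring
  rw [hFz]
  ring
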